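/- arXiv:2410.20143 — 3 statements merged into one kernel-verified Lean document; each statement's English description precedes it below -/
import Mathlib

section
/- The MPB rule satisfies weak exhaustiveness: for every PB instance I = (N, P, c, b, (A_i)), every S ∈ MPB(I), and every project p ∈ P∖S, if c(S) + c(p) ≤ b then S ∪ {p} ∈ MPB(I). -/
variable {N P : Type*}

/-- Total cost of a set of projects. -/
def costOf (c : P → ℕ) (S : Finset P) : ℕ := ∑ p ∈ S, c p

/-- The minimum utility of a voter, where the utility of voter `i` from `S` is the
total cost of the approved projects of `i` in `S`. -/
def minUtil [Fintype N] [Nonempty N] [DecidableEq P] (c : P → ℕ) (A : N → Finset P)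
    (S : Finset P) : ℕ :=
  Finset.univ.inf' Finset.univ_nonempty fun i : N => costOf c (A i ∩ S)

/-- `S` is selected by the Maxmin Participatory Budgeting (MPB) rule: it is feasible and
maximizes the minimum utility among all feasible sets. -/
def MPB [Fintype N] [Nonempty N] [Fintype P] [DecidableEq P] (c : P → ℕ) (b : ℕ)
    (A : N → Finset P) (S : Finset P) : Prop :=
  costOf c S ≤ b ∧
    ∀ T : Finset P, costOf c T ≤ b → minUtil c A T ≤ minUtil c A S

/-- Weak exhaustiveness of MPB: if `S` is MPB-selected, `p ∉ S` and `S ∪ {p}` still fits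
within the budget, then `S ∪ {p}` is also MPB-selected. -/
theorem stmt_5 [Fintype N] [Nonempty N] [Fintype P] [DecidableEq P]
    (c : P → ℕ) (hc : ∀ p, 0 < c p) (b : ℕ) (A : N → Finset P)
    (S : Finset P) (hS : MPB c b A S)
    (p : P) (hp : p ∉ S) (hfit : costOf c S + c p ≤ b) :
    MPB c b A (insert p S) := by
  have hcost : costOf c (insert p S) ≤ b := by
    rw [costOf, Finset.sum_insert hp]
    simp only [costOf] at hfit
    omega
  refine ⟨hcost, fun T hT => ?_⟩
  have hmono : minUtil c A S ≤ minUtil c A (insert p S) := by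
    apply Finset.le_inf'
    intro i _
    refine le_trans (Finset.inf'_le _ (Finset.mem_univ i)) ?_
    apply Finset.sum_le_sum_of_subset
    exact Finset.inter_subset_inter_left (Finset.subset_insert _ _)
  exact le_trans (hS.2 T hT) hmono
end

section
/- The MPB rule satisfies maximal coverage: for every PB instance I = (N, P, c, b, (A_i)), every S ∈ MPB(I), every project p ∈ S such that {j ∈ N : p ∈ A_j} ⊆ {j ∈ N : (S∖{p}) ∩ A_j ≠ ∅} (i.e., p is redundant in S), and every voter i ∈ N: if W(I) ∩ A_i = ∅ then c(a) > b − c(S∖{p}) for every project a ∈ A_i. -/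
variable {N P : Type*}

/-- Project `p` wins, i.e., belongs to some set selected by MPB. -/
def wins [Fintype N] [Nonempty N] [Fintype P] [DecidableEq P] (c : P → ℕ) (b : ℕ)
    (A : N → Finset P) (p : P) : Prop :=
  ∃ S : Finset P, MPB c b A S ∧ p ∈ S

/-- Maximal coverage of the MPB rule: for every MPB-selected set `S`, every redundant
project `p ∈ S` (removing `p` does not change the set of covered voters), and every
voter `i` none of whose approved projects wins, every project `a` approved by `i`
satisfies `c a > b − c(S∖{p})`. -/
theorem stmt_9 [Fintype N] [Nonempty N] [Fintype P] [DecidableEq P]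
    (c : P → ℕ) (hc : ∀ p, 0 < c p) (b : ℕ) (A : N → Finset P)
    (S : Finset P) (hS : MPB c b A S)
    (p : P) (hp : p ∈ S)
    (hred : ∀ j : N, p ∈ A j → ((S \ {p}) ∩ A j).Nonempty)
    (i : N) (hi : ∀ q ∈ A i, ¬ wins c b A q) :
    ∀ a ∈ A i, b < costOf c (S \ {p}) + c a := by
  intro a ha
  by_contra hcon
  push_neg at hcon
  -- A i ∩ S = ∅
  have hAiS : A i ∩ S = ∅ := by
    by_contra hne
    obtain ⟨q, hq⟩ := Finset.nonempty_iff_ne_empty.mpr hne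
    rw [Finset.mem_inter] at hq
    exact hi q hq.1 ⟨S, hS, hq.2⟩
  have hmin0 : minUtil c A S = 0 := by
    have h1 : minUtil c A S ≤ costOf c (A i ∩ S) :=
      Finset.inf'_le _ (Finset.mem_univ i)
    rw [hAiS] at h1
    simpa [costOf] using h1
  have hca : c a ≤ b := le_trans (Nat.le_add_left _ _) hcon
  have hfeas : costOf c ({a} : Finset P) ≤ b := by simpa [costOf] using hca
  refine hi a ha ⟨{a}, ⟨hfeas, fun T hT => ?_⟩, Finset.mem_singleton_self a⟩
  have := hS.2 T hT
  rw [hmin0] at this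
  omega
end

section
/- Neither the cost-utility rule R_c nor the cost-capped-utility rule R_ĉ is range-abiding or range-unanimous. Precisely, for each of the two rules there exists a PB instance with multiple degrees of sophistication (one can take a single project with permissible costs {0, ⌊(b−1)/n⌋, b} where b ≥ n+1, all n voters with lower bound ⌊(b−1)/n⌋, one voter with upper bound b and the rest with upper bound ⌊(b−1)/n⌋) in which: (a) the rule selects an allocation x with τ_j ≠ ∅ and x_j > τ̄_j for some project j, so range-abidingness fails; and (b) Σ_j τ̄_j ≤ b yet the allocation (τ̄_1, …, τ̄_m) is not selected by the rule, so range-unanimity fails. -/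
/-- A valid budget allocation: each project gets one of its permissible costs, and the
total allocated amount is within the budget. -/
def validAlloc {m : ℕ} (C : Fin m → Finset ℕ) (b : ℕ) (x : Fin m → ℕ) : Prop :=
  (∀ j, x j ∈ C j) ∧ ∑ j, x j ≤ b

/-- Cost utility of voter `i` at allocation `x`. -/
def costUtil {N : Type*} {m : ℕ} (lo hi : N → Fin m → ℕ) (i : N) (x : Fin m → ℕ) : ℕ :=
  ∑ j ∈ Finset.univ.filter (fun j : Fin m => lo i j ≤ x j ∧ x j ≤ hi i j), x j

/-- Cost-capped utility of voter `i` at allocation `x`. -/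
def capUtil {N : Type*} {m : ℕ} (lo hi : N → Fin m → ℕ) (i : N) (x : Fin m → ℕ) : ℕ :=
  ∑ j, (if x j < lo i j then 0 else if x j ≤ hi i j then x j else hi i j)

/-- The rule `R_c` selects exactly the valid allocations maximizing total cost utility. -/
def selectedCost {N : Type*} [Fintype N] {m : ℕ} (C : Fin m → Finset ℕ) (b : ℕ)
    (lo hi : N → Fin m → ℕ) (x : Fin m → ℕ) : Prop :=
  validAlloc C b x ∧ ∀ y : Fin m → ℕ, validAlloc C b y →
    ∑ i : N, costUtil lo hi i y ≤ ∑ i : N, costUtil lo hi i x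

/-- The rule `R_ĉ` selects exactly the valid allocations maximizing total cost-capped
utility. -/
def selectedCap {N : Type*} [Fintype N] {m : ℕ} (C : Fin m → Finset ℕ) (b : ℕ)
    (lo hi : N → Fin m → ℕ) (x : Fin m → ℕ) : Prop :=
  validAlloc C b x ∧ ∀ y : Fin m → ℕ, validAlloc C b y →
    ∑ i : N, capUtil lo hi i y ≤ ∑ i : N, capUtil lo hi i x

/-- The set `τ_j` of unanimously approved costs of project `j`. -/
def unanimousCosts {N : Type*} [Fintype N] {m : ℕ} (C : Fin m → Finset ℕ)
    (lo hi : N → Fin m → ℕ) (j : Fin m) : Finset ℕ :=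
  (C j).filter fun v => ∀ i : N, lo i j ≤ v ∧ v ≤ hi i j

/- Auxiliary counterexample instance: two voters, one project with costs {0,1,3},
budget 3, both lower bounds 1, upper bounds 3 and 1. -/
def exC : Fin 1 → Finset ℕ := fun _ => {0, 1, 3}
def exLo : Fin (1 + 1) → Fin 1 → ℕ := fun _ _ => 1
def exHi : Fin (1 + 1) → Fin 1 → ℕ := fun i _ => if i = 0 then 3 else 1

lemma exUnan : unanimousCosts exC exLo exHi 0 = {1} := by decide

lemma exCostLe (y : Fin 1 → ℕ) (hy : validAlloc exC 3 y) :
    ∑ i : Fin (1 + 1), costUtil exLo exHi i y ≤ 3 := by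
  have h : y 0 = 0 ∨ y 0 = 1 ∨ y 0 = 3 := by simpa [exC] using hy.1 0
  rcases h with h | h | h <;>
    simp [costUtil, exLo, exHi, Fin.sum_univ_two, Finset.sum_filter, Fin.sum_univ_one, h] <;>
    decide

lemma exCapLe (y : Fin 1 → ℕ) (hy : validAlloc exC 3 y) :
    ∑ i : Fin (1 + 1), capUtil exLo exHi i y ≤ 4 := by
  have h : y 0 = 0 ∨ y 0 = 1 ∨ y 0 = 3 := by simpa [exC] using hy.1 0
  rcases h with h | h | h <;>
    simp [capUtil, exLo, exHi, Fin.sum_univ_two, Fin.sum_univ_one, h]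

lemma exCost3 (y : Fin 1 → ℕ) (h : y 0 = 3) :
    ∑ i : Fin (1 + 1), costUtil exLo exHi i y = 3 := by
  simp [costUtil, exLo, exHi, Fin.sum_univ_two, Finset.sum_filter, Fin.sum_univ_one, h]

lemma exCost1 (y : Fin 1 → ℕ) (h : y 0 = 1) :
    ∑ i : Fin (1 + 1), costUtil exLo exHi i y = 2 := by
  simp [costUtil, exLo, exHi, Fin.sum_univ_two, Finset.sum_filter, Fin.sum_univ_one, h]
  decide

lemma exCap3 (y : Fin 1 → ℕ) (h : y 0 = 3) :
    ∑ i : Fin (1 + 1), capUtil exLo exHi i y = 4 := by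
  simp [capUtil, exLo, exHi, Fin.sum_univ_two, Fin.sum_univ_one, h]

lemma exCap1 (y : Fin 1 → ℕ) (h : y 0 = 1) :
    ∑ i : Fin (1 + 1), capUtil exLo exHi i y = 2 := by
  simp [capUtil, exLo, exHi, Fin.sum_univ_two, Fin.sum_univ_one, h]

lemma exValid3 : validAlloc exC 3 (fun _ => 3) := by
  constructor
  · decide
  · simp

lemma exMax' (h : (unanimousCosts exC exLo exHi 0).Nonempty) :
    (unanimousCosts exC exLo exHi 0).max' h = 1 := by
  refine le_antisymm (Finset.max'_le _ _ _ fun y hy => ?_) (Finset.le_max' _ _ ?_)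
  · rw [exUnan] at hy; exact (Finset.mem_singleton.mp hy).le
  · rw [exUnan]; exact Finset.mem_singleton_self 1

lemma exNe : ∀ j : Fin 1, (unanimousCosts exC exLo exHi j).Nonempty := by
  intro j
  have hj : j = 0 := Subsingleton.elim j 0
  rw [hj, exUnan]
  exact Finset.singleton_nonempty 1

/-- Neither the cost-utility rule `R_c` nor the cost-capped-utility rule `R_ĉ` is
range-abiding or range-unanimous: for each rule there is an instance where (a) the rule
selects an allocation exceeding the maximum unanimously approved cost of some project,
and (b) the allocation of maximal unanimously approved costs fits in the budget but is
not selected. -/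
theorem stmt_12 :
    (∃ (n m : ℕ) (C : Fin m → Finset ℕ) (b : ℕ)
      (lo hi : Fin (n + 1) → Fin m → ℕ),
      (∀ j, 0 ∈ C j) ∧ (∀ i j, lo i j ∈ C j) ∧ (∀ i j, hi i j ∈ C j) ∧
      (∀ i j, lo i j ≤ hi i j) ∧
      (∃ x : Fin m → ℕ, selectedCost C b lo hi x ∧
        ∃ (j : Fin m) (hne : (unanimousCosts C lo hi j).Nonempty),
          (unanimousCosts C lo hi j).max' hne < x j) ∧
      (∃ hne : ∀ j, (unanimousCosts C lo hi j).Nonempty,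
        (∑ j, (unanimousCosts C lo hi j).max' (hne j)) ≤ b ∧
        ¬ selectedCost C b lo hi fun j => (unanimousCosts C lo hi j).max' (hne j))) ∧
    (∃ (n m : ℕ) (C : Fin m → Finset ℕ) (b : ℕ)
      (lo hi : Fin (n + 1) → Fin m → ℕ),
      (∀ j, 0 ∈ C j) ∧ (∀ i j, lo i j ∈ C j) ∧ (∀ i j, hi i j ∈ C j) ∧
      (∀ i j, lo i j ≤ hi i j) ∧
      (∃ x : Fin m → ℕ, selectedCap C b lo hi x ∧
        ∃ (j : Fin m) (hne : (unanimousCosts C lo hi j).Nonempty),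
          (unanimousCosts C lo hi j).max' hne < x j) ∧
      (∃ hne : ∀ j, (unanimousCosts C lo hi j).Nonempty,
        (∑ j, (unanimousCosts C lo hi j).max' (hne j)) ≤ b ∧
        ¬ selectedCap C b lo hi fun j => (unanimousCosts C lo hi j).max' (hne j))) := by
  constructor
  · refine ⟨1, 1, exC, 3, exLo, exHi, by decide, by decide, by decide, by decide, ?_, ?_⟩
    · refine ⟨fun _ => 3, ⟨exValid3, fun y hy => ?_⟩, 0, exNe 0, ?_⟩
      · rw [exCost3 (fun _ => 3) rfl]; exact exCostLe y hy
      · rw [exMax' (exNe 0)]; norm_num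
    · refine ⟨exNe, ?_, ?_⟩
      · rw [Fin.sum_univ_one, exMax' (exNe 0)]; norm_num
      · rintro ⟨-, hmax⟩
        have h3 := hmax (fun _ => 3) exValid3
        rw [exCost3 (fun _ => 3) rfl, exCost1 _ (exMax' (exNe 0))] at h3
        omega
  · refine ⟨1, 1, exC, 3, exLo, exHi, by decide, by decide, by decide, by decide, ?_, ?_⟩
    · refine ⟨fun _ => 3, ⟨exValid3, fun y hy => ?_⟩, 0, exNe 0, ?_⟩
      · rw [exCap3 (fun _ => 3) rfl]; exact exCapLe y hy
      · rw [exMax' (exNe 0)]; norm_num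
    · refine ⟨exNe, ?_, ?_⟩
      · rw [Fin.sum_univ_one, exMax' (exNe 0)]; norm_num
      · rintro ⟨-, hmax⟩
        have h3 := hmax (fun _ => 3) exValid3
        rw [exCap3 (fun _ => 3) rfl, exCap1 _ (exMax' (exNe 0))] at h3
        omega
end
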